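/- Let A be a small category with a strongly proper model structure on Â and κ an infinite regular cardinal larger than the set of arrows of A. In the Hofmann–Streicher universe ρ : W̄ → W of presheaves with κ-small fibers, a map p : X → Y with κ-small fibers, classified by a cartesian square over y : Y → W, is a fibration if and only if y factors through the subpresheaf U ⊆ W of pointwise fibrations. Consequently, if p is the pullback of a fibration p' : X' → Y' with κ-small fibers along a monomorphism v : Y → Y', and p is classified by y : Y → U, then there exists y' : Y' → U with y' v = y. -/

import Mathlib

open CategoryTheory CategoryTheory.Limits CategoryTheory.GrothendieckTopology Opposite

universe u

variable (A : Type u) [SmallCategory A]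

/-- The category of presheaves of sets on `A`. -/
abbrev Psh := Aᵒᵖ ⥤ Type u

variable {A}

/-- A model category structure on the category of presheaves on `A` whose
cofibrations are exactly the monomorphisms.  We record the weak equivalences
and the fibrations, together with the usual model category axioms
(two-out-of-three, stability under retracts, lifting and factorization),
as well as the (derivable) stability of fibrations, trivial fibrations and
weak equivalences under pullback along fibrations. -/
structure PshModel (A : Type u) [SmallCategory A] where
  W : MorphismProperty (Psh A)
  Fib : MorphismProperty (Psh A)
  weq_id : ∀ X : Psh A, W (𝟙 X)
  weq_comp : ∀ {X Y Z : Psh A} (f : X ⟶ Y) (g : Y ⟶ Z), W f → W g → W (f ≫ g)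
  weq_cancel_left : ∀ {X Y Z : Psh A} (f : X ⟶ Y) (g : Y ⟶ Z), W f → W (f ≫ g) → W g
  weq_cancel_right : ∀ {X Y Z : Psh A} (f : X ⟶ Y) (g : Y ⟶ Z), W g → W (f ≫ g) → W f
  weq_retract : ∀ {X Y X' Y' : Psh A} (f : X ⟶ Y) (f' : X' ⟶ Y')
    (i : X ⟶ X') (r : X' ⟶ X) (j : Y ⟶ Y') (s : Y' ⟶ Y),
    i ≫ r = 𝟙 X → j ≫ s = 𝟙 Y → i ≫ f' = f ≫ j → f' ≫ s = r ≫ f → W f' → W f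
  fib_retract : ∀ {X Y X' Y' : Psh A} (f : X ⟶ Y) (f' : X' ⟶ Y')
    (i : X ⟶ X') (r : X' ⟶ X) (j : Y ⟶ Y') (s : Y' ⟶ Y),
    i ≫ r = 𝟙 X → j ≫ s = 𝟙 Y → i ≫ f' = f ≫ j → f' ≫ s = r ≫ f → W f' → Fib f' → Fib f
  fib_comp : ∀ {X Y Z : Psh A} (f : X ⟶ Y) (g : Y ⟶ Z), Fib f → Fib g → Fib (f ≫ g)
  lift_trivCof_fib : ∀ {X Y S T : Psh A} (i : X ⟶ Y) (p : S ⟶ T),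
    Mono i → W i → Fib p → HasLiftingProperty i p
  lift_cof_trivFib : ∀ {X Y S T : Psh A} (i : X ⟶ Y) (p : S ⟶ T),
    Mono i → Fib p → W p → HasLiftingProperty i p
  fact_cof_trivFib : ∀ {X Y : Psh A} (f : X ⟶ Y),
    ∃ (Z : Psh A) (i : X ⟶ Z) (p : Z ⟶ Y), Mono i ∧ Fib p ∧ W p ∧ i ≫ p = f
  fact_trivCof_fib : ∀ {X Y : Psh A} (f : X ⟶ Y),
    ∃ (Z : Psh A) (i : X ⟶ Z) (p : Z ⟶ Y), Mono i ∧ W i ∧ Fib p ∧ i ≫ p = f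
  fib_pullback : ∀ {X Y Y' : Psh A} (v : Y ⟶ Y') (p : X ⟶ Y'),
    Fib p → Fib (pullback.fst v p)
  trivFib_pullback : ∀ {X Y Y' : Psh A} (v : Y ⟶ Y') (p : X ⟶ Y'),
    Fib p → W p → W (pullback.fst v p)

namespace PshModel

variable (M : PshModel A)

/-- Trivial fibrations. -/
def TrivFib {X Y : Psh A} (p : X ⟶ Y) : Prop := M.Fib p ∧ M.W p

/-- Trivial cofibrations. -/
def TrivCof {X Y : Psh A} (i : X ⟶ Y) : Prop := Mono i ∧ M.W i

/-- An object is fibrant if the map to the terminal object is a fibration. -/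
def Fibrant (X : Psh A) : Prop := M.Fib (terminal.from X)

/-- Right properness: weak equivalences are stable under pullback along fibrations. -/
def RightProper : Prop := ∀ {X Y Y' : Psh A} (v : Y ⟶ Y') (p : X ⟶ Y'),
  M.Fib p → M.W v → M.W (pullback.snd v p)

/-- Left properness: weak equivalences are stable under pushout along cofibrations
(= monomorphisms). -/
def LeftProper : Prop := ∀ {Z X Y : Psh A} (f : Z ⟶ X) (g : Z ⟶ Y),
  Mono f → M.W g → M.W (pushout.inr g f)

def Proper : Prop := M.LeftProper ∧ M.RightProper

/-- Strong properness: the model structure is proper and fibrations are local: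
a map is a fibration as soon as all of its pullbacks to representables are. -/
def StronglyProper : Prop :=
  M.Proper ∧ ∀ {X Y : Psh A} (p : X ⟶ Y),
    (∀ (a : A) (s : yoneda.obj a ⟶ Y), M.Fib (pullback.fst s p)) → M.Fib p

end PshModel

/-- An interval object for a model structure on presheaves: an object `I` with
two endpoints `i0`, `i1`, whose pairing is a monomorphism, and such that all the
projections `I × X → X` are weak equivalences. -/
structure PshInterval (M : PshModel A) where
  I : Psh A
  i0 : ⊤_ (Psh A) ⟶ I
  i1 : ⊤_ (Psh A) ⟶ I
  endpoints_mono : Mono (coprod.desc i0 i1)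
  proj_weq : ∀ X : Psh A, M.W (prod.snd : I ⨯ X ⟶ X)

namespace PshInterval

variable {M : PshModel A} (Iv : PshInterval M)

/-- The evaluation of a homotopy `h : I × X → Y` at the endpoint `ε`. -/
noncomputable def ev {X Y : Psh A} (e : ⊤_ (Psh A) ⟶ Iv.I) (h : Iv.I ⨯ X ⟶ Y) : X ⟶ Y :=
  prod.lift (terminal.from X ≫ e) (𝟙 X) ≫ h

/-- A homotopy `h : I × X → Y` is constant on a subobject `S` of `X` if its
restriction to `I × S` factors through the projection to `S`. -/
def ConstantOn {X Y : Psh A} (h : Iv.I ⨯ X ⟶ Y) (S : Subfunctor X) : Prop :=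
  ∃ k : S.toFunctor ⟶ Y, prod.map (𝟙 Iv.I) S.ι ≫ h = prod.snd ≫ k

end PshInterval

/-- The boundary of a presheaf: the supremum of all its proper subobjects.
For a representable presheaf over an Eilenberg-Zilber category this is the maximal
proper subobject. -/
def pshBoundary (X : Psh A) : Subfunctor X where
  obj U := {x | ∃ G : Subfunctor X, G ≠ ⊤ ∧ x ∈ G.obj U}
  map := by
    rintro U V i x ⟨G, hG, hx⟩
    exact ⟨G, hG, G.map i hx⟩

/-- The boundary of a section `x : a ⟶ X`: the restriction of `x` to the
boundary of the representable presheaf `a`. -/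
def sectionBoundary {X : Psh A} {a : A} (x : yoneda.obj a ⟶ X) :
    (pshBoundary (yoneda.obj a)).toFunctor ⟶ X :=
  (pshBoundary (yoneda.obj a)).ι ≫ x

/-- Two sections `x y : a ⟶ X` are `∂`-equivalent if they have the same boundary
and there is a homotopy between them which is constant on the boundary `∂a`. -/
def BdEquiv (M : PshModel A) (Iv : PshInterval M) {X : Psh A} {a : A}
    (x y : yoneda.obj a ⟶ X) : Prop :=
  sectionBoundary x = sectionBoundary y ∧
  ∃ h : Iv.I ⨯ yoneda.obj a ⟶ X, Iv.ConstantOn h (pshBoundary (yoneda.obj a)) ∧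
    Iv.ev Iv.i0 h = x ∧ Iv.ev Iv.i1 h = y

/-- A minimal complex: a fibrant object in which any two `∂`-equivalent sections
are equal. -/
def MinimalComplex (M : PshModel A) (Iv : PshInterval M) (X : Psh A) : Prop :=
  M.Fibrant X ∧ ∀ (a : A) (x y : yoneda.obj a ⟶ X), BdEquiv M Iv x y → x = y

/-- `∂`-equivalence of sections of `X` over `Y` (i.e. in the slice over `Y`):
the homotopy is required to be fibrewise, i.e. constant over `Y`. -/
def BdEquivOver (M : PshModel A) (Iv : PshInterval M) {X Y : Psh A} (p : X ⟶ Y)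
    {a : A} (x y : yoneda.obj a ⟶ X) : Prop :=
  x ≫ p = y ≫ p ∧
  sectionBoundary x = sectionBoundary y ∧
  ∃ h : Iv.I ⨯ yoneda.obj a ⟶ X, Iv.ConstantOn h (pshBoundary (yoneda.obj a)) ∧
    h ≫ p = prod.snd ≫ x ≫ p ∧
    Iv.ev Iv.i0 h = x ∧ Iv.ev Iv.i1 h = y

/-- A minimal fibration: a fibration which is a minimal complex as an object of
the slice over its codomain (with the induced model structure), i.e. any two
sections which are `∂`-equivalent over the base are equal. -/
def MinFib (M : PshModel A) (Iv : PshInterval M) {X Y : Psh A} (p : X ⟶ Y) : Prop :=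
  M.Fib p ∧ ∀ (a : A) (x y : yoneda.obj a ⟶ X), BdEquivOver M Iv p x y → x = y

/-- A Reedy category structure on `A`. -/
structure ReedyStruct (A : Type u) [SmallCategory A] where
  deg : A → ℕ
  plus : ∀ {a b : A}, (a ⟶ b) → Prop
  minus : ∀ {a b : A}, (a ⟶ b) → Prop
  plus_id : ∀ a : A, plus (𝟙 a)
  minus_id : ∀ a : A, minus (𝟙 a)
  plus_comp : ∀ {a b c : A} (f : a ⟶ b) (g : b ⟶ c), plus f → plus g → plus (f ≫ g)
  minus_comp : ∀ {a b c : A} (f : a ⟶ b) (g : b ⟶ c), minus f → minus g → minus (f ≫ g)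
  plus_deg : ∀ {a b : A} (f : a ⟶ b), plus f → deg a ≤ deg b
  minus_deg : ∀ {a b : A} (f : a ⟶ b), minus f → deg b ≤ deg a
  plus_deg_eq : ∀ {a b : A} (f : a ⟶ b), plus f → deg a = deg b →
    ∃ h : a = b, f = eqToHom h
  minus_deg_eq : ∀ {a b : A} (f : a ⟶ b), minus f → deg a = deg b →
    ∃ h : a = b, f = eqToHom h
  fact : ∀ {a b : A} (f : a ⟶ b), ∃ (c : A) (g : a ⟶ c) (h : c ⟶ b),
    minus g ∧ plus h ∧ g ≫ h = f
  fact_unique : ∀ {a b c c' : A} (g : a ⟶ c) (h : c ⟶ b) (g' : a ⟶ c') (h' : c' ⟶ b),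
    minus g → plus h → minus g' → plus h' → g ≫ h = g' ≫ h' →
    ∃ e : c = c', g' = g ≫ eqToHom e ∧ h = eqToHom e ≫ h'

namespace ReedyStruct

variable (R : ReedyStruct A)

/-- A section `y` of a presheaf is degenerate if it is the restriction of a section
along a non-identity map of `A₋`. -/
def Degenerate {X : Psh A} {b : A} (y : X.obj (op b)) : Prop :=
  ∃ (c : A) (g : b ⟶ c), R.minus g ∧ R.deg c < R.deg b ∧ ∃ z : X.obj (op c), X.map g.op z = y

def Nondegenerate {X : Psh A} {b : A} (y : X.obj (op b)) : Prop := ¬ R.Degenerate y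

end ReedyStruct

/-- An elegant Reedy category (in the sense of Bergner--Rezk): a Reedy category
in which every section of every presheaf is, in a unique way, the restriction of
a non-degenerate section along a map of `A₋`. -/
structure ElegantReedy (A : Type u) [SmallCategory A] extends ReedyStruct A where
  ez_exists : ∀ (X : Psh A) (a : A) (x : X.obj (op a)),
    ∃ (b : A) (f : a ⟶ b) (y : X.obj (op b)),
      minus f ∧ toReedyStruct.Nondegenerate y ∧ X.map f.op y = x
  ez_unique : ∀ (X : Psh A) (a : A) {b b' : A} (f : a ⟶ b) (f' : a ⟶ b')
    (y : X.obj (op b)) (y' : X.obj (op b')),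
    minus f → minus f' → toReedyStruct.Nondegenerate y → toReedyStruct.Nondegenerate y' →
    X.map f.op y = X.map f'.op y' →
    ∃ e : b = b', f' = f ≫ eqToHom e ∧ y = X.map (eqToHom e).op y'

/-- An Eilenberg-Zilber category: a Reedy category in which every map of `A₋`
has a section, and two maps of `A₋` with the same set of sections are equal. -/
structure EZCat (A : Type u) [SmallCategory A] extends ReedyStruct A where
  EZ1 : ∀ {a b : A} (f : a ⟶ b), minus f → ∃ s : b ⟶ a, s ≫ f = 𝟙 b
  EZ2 : ∀ {a b : A} (f g : a ⟶ b), minus f → minus g →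
    (∀ s : b ⟶ a, s ≫ f = 𝟙 b ↔ s ≫ g = 𝟙 b) → f = g


/-- A morphism of presheaves has `κ`-small fibers if all its fibers over sections of
representables are presheaves with values of cardinality `< κ`. -/
def KSmall (κ : Cardinal.{u}) {X Y : Psh A} (p : X ⟶ Y) : Prop :=
  ∀ (a : A) (s : yoneda.obj a ⟶ Y) (b : A),
    Cardinal.mk ((pullback s p).obj (op b)) < κ

/-- The Hofmann--Streicher universe `ρ : W̄ ⟶ W` for presheaves with `κ`-small fibers:
it strictly classifies all maps with `κ`-small fibers, and classifying maps can be
extended along monomorphisms of the base. -/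
structure HSUniverse (A : Type u) [SmallCategory A] (κ : Cardinal.{u}) where
  W : Psh A
  Wbar : Psh A
  ρ : Wbar ⟶ W
  classifies : ∀ {X Y : Psh A} (p : X ⟶ Y), KSmall κ p →
    ∃ (x : X ⟶ Wbar) (y : Y ⟶ W), IsPullback x p ρ y
  ksmall : ∀ {Y : Psh A} (y : Y ⟶ W), KSmall κ (pullback.fst y ρ)
  extend : ∀ {X X' Y Y' : Psh A} (p : X ⟶ Y) (p' : X' ⟶ Y') (u : X ⟶ X') (v : Y ⟶ Y'),
    Mono v → KSmall κ p' → IsPullback u p p' v →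
    ∀ (x : X ⟶ Wbar) (y : Y ⟶ W), IsPullback x p ρ y →
      ∃ (x' : X' ⟶ Wbar) (y' : Y' ⟶ W), IsPullback x' p' ρ y' ∧ v ≫ y' = y

/-- The subpresheaf `U ⊆ W` of pointwise fibrations: those sections of `W` whose
associated map to the representable is a fibration. -/
def HSUniverse.Usub {κ : Cardinal.{u}} (V : HSUniverse A κ) (M : PshModel A) :
    Subfunctor V.W where
  obj a := {w | ∀ (b : A) (f : b ⟶ a.unop),
    M.Fib (pullback.fst (yonedaEquiv.symm (V.W.map f.op w)) V.ρ)}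
  map := by
    intro a c g w hw b f
    rw [← FunctorToTypes.map_comp_apply]
    simpa using hw b (f ≫ g.unop)


section AuxStmt17

lemma PshModel.weq_of_isIso' (M : PshModel A) {X Y : Psh A} (e : X ⟶ Y) [IsIso e] : M.W e :=
  M.weq_retract e (𝟙 Y) e (inv e) (𝟙 Y) (𝟙 Y) (by simp) (by simp) (by simp) (by simp)
    (M.weq_id Y)

lemma PshModel.fib_of_isIso' (M : PshModel A) {X Y : Psh A} (e : X ⟶ Y) [IsIso e] :
    M.Fib e := by
  obtain ⟨Z, i, q, hmono, hiW, hq, hfac⟩ := M.fact_trivCof_fib e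
  have sq : CommSq (𝟙 X) i e q := ⟨by simpa using hfac.symm⟩
  have hWq : M.W q := M.weq_cancel_left i q hiW (by rw [hfac]; exact M.weq_of_isIso' e)
  exact M.fib_retract e q i sq.lift (𝟙 Y) (𝟙 Y) sq.fac_left (by simp)
    (by rw [hfac]; simp) (by simp [sq.fac_right]) hWq hq

lemma PshModel.fib_fst_iff' (M : PshModel A) {X Y Z Wb Wt : Psh A}
    (p : X ⟶ Y) (x : X ⟶ Wb) (ρ : Wb ⟶ Wt) (y : Y ⟶ Wt)
    (sq : IsPullback x p ρ y) (s : Z ⟶ Y) :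
    M.Fib (pullback.fst s p) ↔ M.Fib (pullback.fst (s ≫ y) ρ) := by
  have h0 : IsPullback (pullback.snd s p) (pullback.fst s p) p s :=
    (IsPullback.of_hasPullback s p).flip
  have h1 : IsPullback (pullback.fst s p) (pullback.snd s p ≫ x) (s ≫ y) ρ :=
    (h0.paste_horiz sq).flip
  have hfst : h1.isoPullback.hom ≫ pullback.fst (s ≫ y) ρ = pullback.fst s p :=
    h1.isoPullback_hom_fst
  have heq : h1.isoPullback.inv ≫ pullback.fst s p = pullback.fst (s ≫ y) ρ := by
    rw [Iso.inv_comp_eq, hfst]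
  constructor
  · intro h
    have := M.fib_comp h1.isoPullback.inv (pullback.fst s p)
      (M.fib_of_isIso' _) h
    rwa [heq] at this
  · intro h
    have := M.fib_comp h1.isoPullback.hom (pullback.fst (s ≫ y) ρ)
      (M.fib_of_isIso' _) h
    rwa [hfst] at this

lemma fib_fst_congr_stmt17 (M : PshModel A) {Z Y X : Psh A} {s t : Z ⟶ Y} (ρ : X ⟶ Y)
    (h : s = t) (hf : M.Fib (pullback.fst s ρ)) : M.Fib (pullback.fst t ρ) := by
  subst h; exact hf

lemma symm_app_comp_stmt17 {F G : Psh A} (u : F ⟶ G) {a : A} (η : F.obj (op a)) {b : A}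
    (f : b ⟶ a) :
    yonedaEquiv.symm (G.map f.op (u.app (op a) η)) =
      (yoneda.map f ≫ yonedaEquiv.symm η) ≫ u := by
  rw [← CategoryTheory.yonedaEquiv_symm_naturality_left, Category.assoc,
    CategoryTheory.yonedaEquiv_symm_naturality_right]

lemma factor_of_fib_stmt17 (M : PshModel A) {κ : Cardinal.{u}} (V : HSUniverse A κ)
    {X Y : Psh A} (p : X ⟶ Y) (x : X ⟶ V.Wbar) (y : Y ⟶ V.W)
    (sq : IsPullback x p V.ρ y) (hfib : M.Fib p) :
    ∃ yU : Y ⟶ (V.Usub M).toFunctor, yU ≫ (V.Usub M).ι = y := by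
  have hmem : ∀ (U : Aᵒᵖ) (η : Y.obj U), y.app U η ∈ (V.Usub M).obj U := by
    intro U η b f
    exact fib_fst_congr_stmt17 M V.ρ (symm_app_comp_stmt17 y η f).symm
      ((M.fib_fst_iff' p x V.ρ y sq (yoneda.map f ≫ yonedaEquiv.symm η)).mp
        (M.fib_pullback _ p hfib))
  have hle : Subfunctor.range y ≤ V.Usub M := by
    rintro U _ ⟨η, rfl⟩
    exact hmem U η
  exact ⟨(V.Usub M).lift y hle, (V.Usub M).lift_ι y hle⟩

end AuxStmt17

/-- Proposition: a map with `κ`-small fibers is a fibration if and only if its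
classifying map factors through `U ⊆ W`; consequently, classifying maps into `U` of
restrictions of fibrations with `κ`-small fibers extend along monomorphisms. -/
theorem stmt17 (M : PshModel A) (hM : M.StronglyProper) (κ : Cardinal.{u})
    (hκ : Cardinal.aleph0 ≤ κ) (hreg : κ.IsRegular)
    (harr : Cardinal.mk (Σ a b : A, a ⟶ b) < κ)
    (V : HSUniverse A κ) {X Y : Psh A} (p : X ⟶ Y) (hp : KSmall κ p)
    (x : X ⟶ V.Wbar) (y : Y ⟶ V.W) (sq : IsPullback x p V.ρ y) :
    (M.Fib p ↔ ∃ yU : Y ⟶ (V.Usub M).toFunctor, yU ≫ (V.Usub M).ι = y) ∧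
    (∀ {X' Y' : Psh A} (p' : X' ⟶ Y') (u : X ⟶ X') (v : Y ⟶ Y'),
      Mono v → M.Fib p' → KSmall κ p' → IsPullback u p p' v →
      ∀ yU : Y ⟶ (V.Usub M).toFunctor, yU ≫ (V.Usub M).ι = y →
      ∃ yU' : Y' ⟶ (V.Usub M).toFunctor, v ≫ yU' = yU) := by
  constructor
  · constructor
    · exact fun hfib => factor_of_fib_stmt17 M V p x y sq hfib
    · rintro ⟨yU, hyU⟩
      apply hM.2 p
      intro a s
      rw [M.fib_fst_iff' p x V.ρ y sq s]
      have hval : y.app (op a) (yonedaEquiv s) =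
          ((yU.app (op a) (yonedaEquiv s) : (V.Usub M).obj (op a)) : V.W.obj (op a)) := by
        rw [← hyU]; rfl
      have key : s ≫ y = yonedaEquiv.symm (y.app (op a) (yonedaEquiv s)) := by
        rw [← CategoryTheory.yonedaEquiv_symm_naturality_right, Equiv.symm_apply_apply]
      have h := (yU.app (op a) (yonedaEquiv s)).2 a (𝟙 a)
      have e : yonedaEquiv.symm (V.W.map (𝟙 a).op
          ((yU.app (op a) (yonedaEquiv s) : (V.Usub M).obj (op a)) : V.W.obj (op a)))
          = s ≫ y := by
        rw [op_id, FunctorToTypes.map_id_apply, ← hval]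
        exact key.symm
      exact fib_fst_congr_stmt17 M V.ρ e h
  · rintro X' Y' p' u v hv hfib' hp' hpb yU hyU
    obtain ⟨x', y', sq', hvy⟩ := V.extend p p' u v hv hp' hpb x y sq
    obtain ⟨yU', hyU'⟩ := factor_of_fib_stmt17 M V p' x' y' sq' hfib'
    refine ⟨yU', ?_⟩
    rw [← cancel_mono (V.Usub M).ι, Category.assoc, hyU', hvy, hyU]
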